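/- Let φ : M → K be a strictly increasing homeomorphism with π_K ∘ φ = ψ ∘ π_M for an increasing homeomorphism ψ : [0, λ(M)] → [0, λ(K)] satisfying ψ(E_M) = E_K. Then φ coincides with the selector map φ_σ = σ_K ∘ ψ ∘ π_M outside the set ⋃_{s ∈ E_M} (π_M^{-1}(s) \ {min π_M^{-1}(s)}), which has Lebesgue measure zero; in particular φ = φ_σ a.e. on M. -/

import Mathlib

open MeasureTheory Set

/-- Measure projection. -/
noncomputable def piProj (K : Set ℝ) (x : ℝ) : ℝ :=
  (volume (Set.Icc (sInf K) x ∩ K)).toReal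

/-- Left-endpoint selector `σ_K`. -/
noncomputable def sigmaSel (K : Set ℝ) (t : ℝ) : ℝ :=
  sInf {x ∈ K | piProj K x = t}

/-- The exceptional set `E_K` of values with multi-point fibers. -/
def ESet (K : Set ℝ) : Set ℝ :=
  {t | ∃ x y, x ∈ K ∧ y ∈ K ∧ x ≠ y ∧ piProj K x = t ∧ piProj K y = t}

open MeasureTheory Set

lemma inter_vol_ne_top {M : Set ℝ} (hfin : volume M ≠ ⊤) (A : Set ℝ) :
    volume (A ∩ M) ≠ ⊤ :=
  ne_top_of_le_ne_top hfin (measure_mono inter_subset_right)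

lemma piProj_mono' {M : Set ℝ} (hfin : volume M ≠ ⊤) {x y : ℝ} (hxy : x ≤ y) :
    piProj M x ≤ piProj M y :=
  ENNReal.toReal_mono (inter_vol_ne_top hfin _)
    (measure_mono (inter_subset_inter_left _ (Icc_subset_Icc_right hxy)))

lemma piProj_nonneg (M : Set ℝ) (x : ℝ) : 0 ≤ piProj M x := ENNReal.toReal_nonneg

lemma piProj_le (M : Set ℝ) (hfin : volume M ≠ ⊤) (x : ℝ) :
    piProj M x ≤ (volume M).toReal :=
  ENNReal.toReal_mono hfin (measure_mono inter_subset_right)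

lemma piProj_sub {M : Set ℝ} (hMmeas : MeasurableSet M) (hfin : volume M ≠ ⊤)
    {x y : ℝ} (hx : sInf M ≤ x) (hxy : x ≤ y) :
    piProj M y = piProj M x + (volume (Ioc x y ∩ M)).toReal := by
  unfold piProj
  have hset : Icc (sInf M) y ∩ M = (Icc (sInf M) x ∩ M) ∪ (Ioc x y ∩ M) := by
    ext z
    simp only [mem_inter_iff, mem_Icc, mem_Ioc, mem_union]
    constructor
    · rintro ⟨⟨h1, h2⟩, hz⟩
      rcases le_or_gt z x with h | h
      · exact Or.inl ⟨⟨h1, h⟩, hz⟩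
      · exact Or.inr ⟨⟨h, h2⟩, hz⟩
    · rintro (⟨⟨h1, h2⟩, hz⟩ | ⟨⟨h1, h2⟩, hz⟩)
      · exact ⟨⟨h1, h2.trans hxy⟩, hz⟩
      · exact ⟨⟨hx.trans h1.le, h2⟩, hz⟩
  have hdisj : Disjoint (Icc (sInf M) x ∩ M) (Ioc x y ∩ M) := by
    refine Set.disjoint_left.mpr ?_
    rintro z ⟨hz1, _⟩ ⟨hz2, _⟩
    exact absurd hz1.2 (not_le.mpr hz2.1)
  rw [hset, measure_union hdisj (measurableSet_Ioc.inter hMmeas),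
    ENNReal.toReal_add (inter_vol_ne_top hfin _) (inter_vol_ne_top hfin _)]

lemma piProj_le_add {M : Set ℝ} (hfin : volume M ≠ ⊤) {x y : ℝ} (hxy : x ≤ y) :
    piProj M y ≤ piProj M x + (volume (Ioc x y ∩ M)).toReal := by
  unfold piProj
  have hsub : Icc (sInf M) y ∩ M ⊆ (Icc (sInf M) x ∩ M) ∪ (Ioc x y ∩ M) := by
    rintro z ⟨⟨h1, h2⟩, hz⟩
    rcases le_or_gt z x with h | h
    · exact Or.inl ⟨⟨h1, h⟩, hz⟩
    · exact Or.inr ⟨⟨h, h2⟩, hz⟩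
  calc (volume (Icc (sInf M) y ∩ M)).toReal
      ≤ (volume (Icc (sInf M) x ∩ M) + volume (Ioc x y ∩ M)).toReal := by
        refine ENNReal.toReal_mono ?_ ((measure_mono hsub).trans (measure_union_le _ _))
        exact ENNReal.add_ne_top.mpr ⟨inter_vol_ne_top hfin _, inter_vol_ne_top hfin _⟩
    _ = _ := ENNReal.toReal_add (inter_vol_ne_top hfin _) (inter_vol_ne_top hfin _)

lemma piProj_continuous {M : Set ℝ} (hfin : volume M ≠ ⊤) :
    Continuous (piProj M) := by
  have : LipschitzWith 1 (piProj M) := by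
    refine LipschitzWith.of_dist_le_mul fun x y => ?_
    wlog h : y ≤ x generalizing x y
    · rw [dist_comm, dist_comm x y]; exact this y x (le_of_not_ge h)
    rw [NNReal.coe_one, one_mul, Real.dist_eq, Real.dist_eq,
      abs_of_nonneg (sub_nonneg.mpr (piProj_mono' hfin h)),
      abs_of_nonneg (sub_nonneg.mpr h)]
    have h1 := piProj_le_add hfin h (M := M)
    have h2 : (volume (Ioc y x ∩ M)).toReal ≤ x - y := by
      have hm : volume (Ioc y x ∩ M) ≤ volume (Ioc y x) := measure_mono inter_subset_left
      have := ENNReal.toReal_mono (by rw [Real.volume_Ioc]; exact ENNReal.ofReal_ne_top) hm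
      rwa [Real.volume_Ioc, ENNReal.toReal_ofReal (sub_nonneg.mpr h)] at this
    linarith
  exact this.continuous

theorem stmt18 (K M : Set ℝ) (hK : IsCompact K) (hM : IsCompact M)
    (hKpos : 0 < volume K) (hMpos : 0 < volume M)
    (φ ψ : ℝ → ℝ)
    (hφmono : StrictMonoOn φ M) (hφbij : Set.BijOn φ M K)
    (hφcont : ContinuousOn φ M)
    (hψmono : StrictMonoOn ψ (Set.Icc (0 : ℝ) (volume M).toReal))
    (hψcont : ContinuousOn ψ (Set.Icc (0 : ℝ) (volume M).toReal))
    (hψbij : Set.BijOn ψ (Set.Icc (0 : ℝ) (volume M).toReal)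
      (Set.Icc (0 : ℝ) (volume K).toReal))
    (hψE : ψ '' ESet M = ESet K)
    (hcomm : ∀ y ∈ M, piProj K (φ y) = ψ (piProj M y)) :
    let N : Set ℝ := ⋃ s ∈ ESet M,
      ({y ∈ M | piProj M y = s} \ {sInf {y ∈ M | piProj M y = s}})
    volume N = 0 ∧
    ∀ y ∈ M \ N, φ y = sigmaSel K (ψ (piProj M y)) := by
  intro N
  have hMmeas : MeasurableSet M := hM.measurableSet
  have hfinM : volume M ≠ ⊤ := hM.measure_lt_top.ne
  constructor
  · -- volume N = 0
    -- E_M is countable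
    have hsub : ESet M ⊆ piProj M '' (Set.range ((↑) : ℚ → ℝ)) := by
      rintro s ⟨x, y, hx, hy, hne, hpx, hpy⟩
      have key : ∀ x y : ℝ, x ∈ M → y ∈ M → x < y → piProj M x = s → piProj M y = s →
          s ∈ piProj M '' (Set.range ((↑) : ℚ → ℝ)) := by
        intro x y _ _ hlt hpx hpy
        obtain ⟨q, hq1, hq2⟩ := exists_rat_btwn hlt
        refine ⟨(q : ℝ), ⟨q, rfl⟩, le_antisymm ?_ ?_⟩
        · rw [← hpy]; exact piProj_mono' hfinM hq2.le
        · rw [← hpx]; exact piProj_mono' hfinM hq1.le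
      rcases hne.lt_or_gt with h | h
      · exact key x y hx hy h hpx hpy
      · exact key y x hy hx h hpy hpx
    have hcount : (ESet M).Countable :=
      Set.Countable.mono hsub ((Set.countable_range _).image _)
    rw [measure_biUnion_null_iff hcount]
    intro s hs
    set F : Set ℝ := {y ∈ M | piProj M y = s} with hF
    have hFsub : F ⊆ M := fun z hz => hz.1
    have hFcomp : IsCompact F := by
      have : F = M ∩ piProj M ⁻¹' {s} := by ext z; simp [hF]
      rw [this]
      exact hM.inter_right (isClosed_singleton.preimage (piProj_continuous hfinM))
    obtain ⟨x, y, hx, hy, hne, hpx, hpy⟩ := hs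
    have hFne : F.Nonempty := ⟨x, hx, hpx⟩
    have ha : sInf F ∈ F := hFcomp.sInf_mem hFne
    have hb : sSup F ∈ F := hFcomp.sSup_mem hFne
    have hab : sInf F ≤ sSup F := csInf_le_csSup hFne hFcomp.bddBelow hFcomp.bddAbove
    have hIocnull : volume (Ioc (sInf F) (sSup F) ∩ M) = 0 := by
      have hInfM : sInf M ≤ sInf F := csInf_le hM.bddBelow (hFsub ha)
      have := piProj_sub hMmeas hfinM hInfM hab
      rw [ha.2, hb.2] at this
      have h0 : (volume (Ioc (sInf F) (sSup F) ∩ M)).toReal = 0 := by linarith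
      rcases (ENNReal.toReal_eq_zero_iff _).mp h0 with h | h
      · exact h
      · exact absurd h (inter_vol_ne_top hfinM _)
    refine measure_mono_null ?_ hIocnull
    rintro z ⟨hz, hzne⟩
    have h1 : sInf F ≤ z := csInf_le hFcomp.bddBelow hz
    have h2 : z ≤ sSup F := le_csSup hFcomp.bddAbove hz
    exact ⟨⟨lt_of_le_of_ne h1 (Ne.symm (by simpa using hzne)), h2⟩, hFsub hz⟩
  · -- the pointwise statement
    rintro y ⟨hyM, hyN⟩
    set t : ℝ := ψ (piProj M y) with ht
    set S : Set ℝ := {x ∈ K | piProj K x = t} with hS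
    have hφyS : φ y ∈ S := ⟨hφbij.mapsTo hyM, hcomm y hyM⟩
    have hlow : ∀ x ∈ S, φ y ≤ x := by
      rintro x ⟨hxK, hxt⟩
      obtain ⟨z, hzM, rfl⟩ := hφbij.surjOn hxK
      have hmemz : piProj M z ∈ Set.Icc (0 : ℝ) (volume M).toReal :=
        ⟨piProj_nonneg M z, piProj_le M hfinM z⟩
      have hmemy : piProj M y ∈ Set.Icc (0 : ℝ) (volume M).toReal :=
        ⟨piProj_nonneg M y, piProj_le M hfinM y⟩
      have hzy : piProj M z = piProj M y := by
        apply hψbij.injOn hmemz hmemy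
        rw [← hcomm z hzM, hxt]
      rcases eq_or_ne z y with rfl | hne
      · exact le_rfl
      · -- then piProj M y ∈ ESet M and y = sInf of its fiber
        have hsE : piProj M y ∈ ESet M := ⟨z, y, hzM, hyM, hne, hzy, rfl⟩
        have hymin : y = sInf {w ∈ M | piProj M w = piProj M y} := by
          by_contra hcon
          apply hyN
          simp only [N, Set.mem_iUnion]
          exact ⟨piProj M y, hsE, ⟨⟨hyM, rfl⟩, by simpa using hcon⟩⟩
        have hFin : z ∈ {w ∈ M | piProj M w = piProj M y} := ⟨hzM, hzy⟩
        have hbdd : BddBelow {w ∈ M | piProj M w = piProj M y} :=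
          hM.bddBelow.mono (fun w hw => hw.1)
        have hyz : y ≤ z := hymin ▸ csInf_le hbdd hFin
        rcases eq_or_lt_of_le hyz with rfl | hlt
        · exact le_rfl
        · exact (hφmono hyM hzM hlt).le
    have hbddS : BddBelow S := hK.bddBelow.mono (fun w hw => hw.1)
    exact le_antisymm (le_csInf ⟨φ y, hφyS⟩ hlow) (csInf_le hbddS hφyS)
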